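/- arXiv:2105.11369 — 4 statements merged into one kernel-verified Lean document; each statement's English description precedes it below -/
import Mathlib

section
/- If Λ(x) is positive definite and u ∈ ℝ^U satisfies ‖u − x‖_x < 1 (so that Λ(u) is positive definite and the local norm ‖·‖_u is defined), then for every nonzero v ∈ ℝ^U one has (1 − ‖u − x‖_x)·‖v‖_x ≤ ‖v‖_u ≤ (1 − ‖u − x‖_x)⁻¹·‖v‖_x. -/
open Matrix

/-- The gradient of the barrier `f(x) = -log det Λ(x)`:
`g(x)_i = -tr(Λ(x)⁻¹ · Λ(e_i))` (with the total matrix inverse, `0` for singular matrices). -/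
noncomputable def grad {U L : ℕ} (Lam : (Fin U → ℝ) →ₗ[ℝ] Matrix (Fin L) (Fin L) ℝ)
    (x : Fin U → ℝ) : Fin U → ℝ :=
  fun i => -((Lam x)⁻¹ * Lam (Pi.single i 1)).trace

/-- The Hessian of the barrier: `H(x)_{ij} = tr(Λ(x)⁻¹ Λ(e_i) Λ(x)⁻¹ Λ(e_j))`. -/
noncomputable def hess {U L : ℕ} (Lam : (Fin U → ℝ) →ₗ[ℝ] Matrix (Fin L) (Fin L) ℝ)
    (x : Fin U → ℝ) : Matrix (Fin U) (Fin U) ℝ :=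
  Matrix.of fun i j =>
    ((Lam x)⁻¹ * Lam (Pi.single i 1) * (Lam x)⁻¹ * Lam (Pi.single j 1)).trace

/-- The local norm `‖v‖_x = (vᵀ H(x) v)^{1/2}`. -/
noncomputable def locNorm {U L : ℕ} (Lam : (Fin U → ℝ) →ₗ[ℝ] Matrix (Fin L) (Fin L) ℝ)
    (x v : Fin U → ℝ) : ℝ :=
  Real.sqrt (v ⬝ᵥ (hess Lam x).mulVec v)

/-- The dual local norm `‖t‖*_x = (tᵀ H(x)⁻¹ t)^{1/2}`. -/
noncomputable def dualNorm {U L : ℕ} (Lam : (Fin U → ℝ) →ₗ[ℝ] Matrix (Fin L) (Fin L) ℝ)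
    (x t : Fin U → ℝ) : ℝ :=
  Real.sqrt (t ⬝ᵥ (hess Lam x)⁻¹.mulVec t)

section Aux

open scoped MatrixOrder

set_option linter.unusedSectionVars false
set_option maxHeartbeats 1000000

variable {n : Type*} [Fintype n] [DecidableEq n]

omit [DecidableEq n] in
lemma aux_trace_transpose_mul_self_nonneg (N : Matrix n n ℝ) : 0 ≤ (Nᵀ * N).trace := by
  rw [Matrix.trace]
  refine Finset.sum_nonneg fun j _ => ?_
  rw [Matrix.diag_apply, Matrix.mul_apply]
  exact Finset.sum_nonneg fun i _ => by simp [Matrix.transpose_apply, mul_self_nonneg]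

lemma aux_symm_of_psd_sqrt {C : Matrix n n ℝ} (hC : C.PosSemidef) :
    (CFC.sqrt C)ᵀ = CFC.sqrt C := by
  have := (Matrix.nonneg_iff_posSemidef.mp (CFC.sqrt_nonneg C)).1
  rwa [Matrix.IsHermitian, Matrix.conjTranspose_eq_transpose_of_trivial] at this

lemma aux_herm_of_symm {M : Matrix n n ℝ} (h : Mᵀ = M) : M.IsHermitian := by
  rwa [Matrix.IsHermitian, Matrix.conjTranspose_eq_transpose_of_trivial]

lemma aux_trace_CSDS_nonneg {C D S : Matrix n n ℝ}
    (hC : C.PosSemidef) (hD : D.PosSemidef) (hS : Sᵀ = S) :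
    0 ≤ (C * S * D * S).trace := by
  obtain ⟨RC, hRCs, hC2⟩ : ∃ R : Matrix n n ℝ, Rᵀ = R ∧ R * R = C :=
    ⟨CFC.sqrt C, aux_symm_of_psd_sqrt hC, CFC.sqrt_mul_sqrt_self C hC.nonneg⟩
  obtain ⟨RD, hRDs, hD2⟩ : ∃ R : Matrix n n ℝ, Rᵀ = R ∧ R * R = D :=
    ⟨CFC.sqrt D, aux_symm_of_psd_sqrt hD, CFC.sqrt_mul_sqrt_self D hD.nonneg⟩
  rw [← hC2, ← hD2]
  calc (RC * RC * S * (RD * RD) * S).trace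
      = (RC * (RC * S * (RD * (RD * S)))).trace := by
        congr 1; simp [Matrix.mul_assoc]
    _ = ((RC * S * (RD * (RD * S))) * RC).trace := Matrix.trace_mul_comm _ _
    _ = ((RD * S * RC)ᵀ * (RD * S * RC)).trace := by
        rw [Matrix.transpose_mul, Matrix.transpose_mul, hS, hRCs, hRDs]
        congr 1; simp [Matrix.mul_assoc]
    _ ≥ 0 := aux_trace_transpose_mul_self_nonneg _

lemma aux_trace_mono {C₁ C₂ S : Matrix n n ℝ} (hC₁ : C₁.PosSemidef) (hC₂ : C₂.PosSemidef)
    (hd : (C₂ - C₁).PosSemidef) (hS : Sᵀ = S) :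
    (C₁ * S * C₁ * S).trace ≤ (C₂ * S * C₂ * S).trace := by
  have key : (C₂ * S * C₂ * S).trace = (C₁ * S * C₁ * S).trace
      + ((C₂ - C₁) * S * C₂ * S).trace + (C₁ * S * (C₂ - C₁) * S).trace := by
    simp only [Matrix.sub_mul, Matrix.mul_sub, Matrix.trace_sub]
    ring
  have h1 := aux_trace_CSDS_nonneg hd hC₂ hS
  have h2 := aux_trace_CSDS_nonneg hC₁ hd hS
  linarith

lemma aux_psd_smul {c : ℝ} (hc : 0 ≤ c) {X : Matrix n n ℝ} (hX : X.PosSemidef) :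
    (c • X).PosSemidef := by
  refine posSemidef_iff_dotProduct_mulVec.mpr ⟨?_, fun v => ?_⟩
  · rw [Matrix.IsHermitian, Matrix.conjTranspose_smul]
    rw [Matrix.IsHermitian.eq hX.1]; norm_num
  · rw [Matrix.smul_mulVec, dotProduct_smul]
    exact smul_nonneg hc (hX.dotProduct_mulVec_nonneg v)

lemma aux_pd_smul {c : ℝ} (hc : 0 < c) {X : Matrix n n ℝ} (hX : X.PosDef) :
    (c • X).PosDef := by
  refine posDef_iff_dotProduct_mulVec.mpr ⟨?_, fun v hv => ?_⟩
  · rw [Matrix.IsHermitian, Matrix.conjTranspose_smul]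
    rw [Matrix.IsHermitian.eq hX.1]; norm_num
  · rw [Matrix.smul_mulVec, dotProduct_smul]
    exact smul_pos hc (hX.dotProduct_mulVec_pos hv)

lemma aux_dot_mulVec_left (X : Matrix n n ℝ) (a b : n → ℝ) :
    (X *ᵥ a) ⬝ᵥ b = a ⬝ᵥ (Xᵀ *ᵥ b) := by
  rw [Matrix.dotProduct_mulVec, Matrix.vecMul_transpose]

/-- a symmetric "inverse square root" of a posdef matrix -/
lemma aux_exists_isqrt {A : Matrix n n ℝ} (hA : A.PosDef) :
    ∃ R : Matrix n n ℝ, Rᵀ = R ∧ R * R = A⁻¹ ∧ R⁻¹ * R = 1 ∧ R * R⁻¹ = 1 ∧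
      R⁻¹ᵀ = R⁻¹ ∧ R⁻¹ * R⁻¹ = A := by
  have hAinv : (A⁻¹).PosDef := hA.inv
  refine ⟨CFC.sqrt A⁻¹, aux_symm_of_psd_sqrt hAinv.posSemidef,
    CFC.sqrt_mul_sqrt_self _ hAinv.posSemidef.nonneg, ?_⟩
  have h2 := CFC.sqrt_mul_sqrt_self _ hAinv.posSemidef.nonneg
  have hdet : IsUnit (CFC.sqrt A⁻¹).det := by
    have hd : (CFC.sqrt A⁻¹).det * (CFC.sqrt A⁻¹).det = A⁻¹.det := by
      rw [← Matrix.det_mul, h2]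
    have hpos := hAinv.det_pos
    refine isUnit_iff_ne_zero.mpr fun h0 => ?_
    rw [h0, mul_zero] at hd
    exact hpos.ne hd
  refine ⟨Matrix.nonsing_inv_mul _ hdet, Matrix.mul_nonsing_inv _ hdet, ?_, ?_⟩
  · rw [Matrix.transpose_nonsing_inv, aux_symm_of_psd_sqrt hAinv.posSemidef]
  · rw [← Matrix.mul_inv_rev, h2,
      Matrix.nonsing_inv_nonsing_inv _ (Matrix.isUnit_iff_isUnit_det _ |>.mp hA.isUnit)]

lemma aux_inv_antitone {A B : Matrix n n ℝ} (hA : A.PosDef) (hB : B.PosDef)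
    (hAB : (B - A).PosSemidef) : (A⁻¹ - B⁻¹).PosSemidef := by
  have hBdet : IsUnit B.det := Matrix.isUnit_iff_isUnit_det _ |>.mp hB.isUnit
  refine posSemidef_iff_dotProduct_mulVec.mpr ⟨hA.inv.1.sub hB.inv.1, fun v => ?_⟩
  rw [star_trivial, Matrix.sub_mulVec, dotProduct_sub, sub_nonneg]
  obtain ⟨R, hRs, hR2, hRl, hRr, hRis, hRi2⟩ := aux_exists_isqrt hA
  have ht : v ⬝ᵥ B⁻¹ *ᵥ v = (B⁻¹ *ᵥ v) ⬝ᵥ B *ᵥ (B⁻¹ *ᵥ v) := by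
    rw [Matrix.mulVec_mulVec, Matrix.mul_nonsing_inv _ hBdet, Matrix.one_mulVec]
    exact dotProduct_comm _ _
  have hab : (R⁻¹ *ᵥ (B⁻¹ *ᵥ v)) ⬝ᵥ (R *ᵥ v) = v ⬝ᵥ B⁻¹ *ᵥ v := by
    rw [aux_dot_mulVec_left, hRis, Matrix.mulVec_mulVec, hRl, Matrix.one_mulVec]
    exact dotProduct_comm _ _
  have haa : (R⁻¹ *ᵥ (B⁻¹ *ᵥ v)) ⬝ᵥ (R⁻¹ *ᵥ (B⁻¹ *ᵥ v))
      = (B⁻¹ *ᵥ v) ⬝ᵥ A *ᵥ (B⁻¹ *ᵥ v) := by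
    rw [aux_dot_mulVec_left, hRis, Matrix.mulVec_mulVec, hRi2]
  have hbb : (R *ᵥ v) ⬝ᵥ (R *ᵥ v) = v ⬝ᵥ A⁻¹ *ᵥ v := by
    rw [aux_dot_mulVec_left, hRs, Matrix.mulVec_mulVec, hR2]
  have hcs : ∀ a b : n → ℝ, (a ⬝ᵥ b) ^ 2 ≤ (a ⬝ᵥ a) * (b ⬝ᵥ b) := by
    intro a b
    simpa [dotProduct, pow_two] using
      Finset.sum_mul_sq_le_sq_mul_sq Finset.univ a b
  have hABq : (B⁻¹ *ᵥ v) ⬝ᵥ A *ᵥ (B⁻¹ *ᵥ v) ≤ (B⁻¹ *ᵥ v) ⬝ᵥ B *ᵥ (B⁻¹ *ᵥ v) := by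
    have := hAB.dotProduct_mulVec_nonneg (B⁻¹ *ᵥ v)
    rw [star_trivial, Matrix.sub_mulVec, dotProduct_sub, sub_nonneg] at this
    exact this
  have hcs' := hcs (R⁻¹ *ᵥ (B⁻¹ *ᵥ v)) (R *ᵥ v)
  rw [hab, haa, hbb] at hcs'
  have htnn : 0 ≤ v ⬝ᵥ B⁻¹ *ᵥ v := by simpa using hB.inv.posSemidef.dotProduct_mulVec_nonneg v
  have hsnn : 0 ≤ v ⬝ᵥ A⁻¹ *ᵥ v := by simpa using hA.inv.posSemidef.dotProduct_mulVec_nonneg v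
  rcases eq_or_lt_of_le htnn with h0 | hpos
  · rw [← h0]; exact hsnn
  · have key : (v ⬝ᵥ B⁻¹ *ᵥ v) ^ 2 ≤ (v ⬝ᵥ B⁻¹ *ᵥ v) * (v ⬝ᵥ A⁻¹ *ᵥ v) := by
      calc (v ⬝ᵥ B⁻¹ *ᵥ v) ^ 2
          ≤ ((B⁻¹ *ᵥ v) ⬝ᵥ A *ᵥ (B⁻¹ *ᵥ v)) * (v ⬝ᵥ A⁻¹ *ᵥ v) := hcs'
        _ ≤ (v ⬝ᵥ B⁻¹ *ᵥ v) * (v ⬝ᵥ A⁻¹ *ᵥ v) := by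
            refine mul_le_mul_of_nonneg_right ?_ hsnn
            rw [ht]; exact hABq
    rw [pow_two] at key
    exact le_of_mul_le_mul_left key hpos

lemma aux_abs_quad_le {M : Matrix n n ℝ} (hM : Mᵀ = M) (z : n → ℝ) :
    |z ⬝ᵥ M *ᵥ z| ≤ Real.sqrt (M * M).trace * (z ⬝ᵥ z) := by
  have h1 : z ⬝ᵥ M *ᵥ z = ∑ p : n × n, M p.1 p.2 * (z p.1 * z p.2) := by
    rw [Fintype.sum_prod_type]
    simp only [dotProduct, mulVec, Finset.mul_sum]
    congr 1; ext i; congr 1; ext j; ring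
  have h2 : (M * M).trace = ∑ p : n × n, (M p.1 p.2) ^ 2 := by
    rw [Fintype.sum_prod_type]
    simp only [Matrix.trace, Matrix.diag_apply, Matrix.mul_apply]
    have hs : ∀ i j, M j i = M i j := fun i j => congrFun (congrFun hM i) j
    congr 1; ext i; congr 1; ext j
    rw [hs i j, pow_two]
  have h3 : (z ⬝ᵥ z) ^ 2 = ∑ p : n × n, (z p.1 * z p.2) ^ 2 := by
    rw [Fintype.sum_prod_type, dotProduct, pow_two, Finset.sum_mul_sum]
    congr 1; ext i; congr 1; ext j; ring
  have hcs := Finset.sum_mul_sq_le_sq_mul_sq Finset.univ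
    (fun p : n × n => M p.1 p.2) (fun p : n × n => z p.1 * z p.2)
  have key : (z ⬝ᵥ M *ᵥ z) ^ 2 ≤ (M * M).trace * (z ⬝ᵥ z) ^ 2 := by
    rw [h1, h2, h3]; exact hcs
  have htr : 0 ≤ (M * M).trace := by
    rw [h2]; exact Finset.sum_nonneg fun p _ => sq_nonneg _
  have hzz : 0 ≤ z ⬝ᵥ z := by
    rw [dotProduct]; exact Finset.sum_nonneg fun i _ => mul_self_nonneg _
  calc |z ⬝ᵥ M *ᵥ z| = Real.sqrt ((z ⬝ᵥ M *ᵥ z) ^ 2) := (Real.sqrt_sq_eq_abs _).symm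
    _ ≤ Real.sqrt ((M * M).trace * (z ⬝ᵥ z) ^ 2) := Real.sqrt_le_sqrt key
    _ = Real.sqrt (M * M).trace * (z ⬝ᵥ z) := by
        rw [Real.sqrt_mul htr, Real.sqrt_sq hzz]

/-- `|wᵀ S w| ≤ √(tr(A⁻¹SA⁻¹S)) · wᵀAw` for `S` symmetric, `A` posdef. -/
lemma aux_quad_bound {A S : Matrix n n ℝ} (hA : A.PosDef) (hS : Sᵀ = S) (w : n → ℝ) :
    |w ⬝ᵥ S *ᵥ w| ≤ Real.sqrt ((A⁻¹ * S * A⁻¹ * S).trace) * (w ⬝ᵥ A *ᵥ w) := by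
  obtain ⟨R, hRs, hR2, hRl, hRr, hRis, hRi2⟩ := aux_exists_isqrt hA
  set M := R * S * R with hM
  have hMs : Mᵀ = M := by
    rw [hM, Matrix.transpose_mul, Matrix.transpose_mul, hRs, hS, Matrix.mul_assoc]
  have htr : (M * M).trace = (A⁻¹ * S * A⁻¹ * S).trace := by
    rw [hM]
    calc (R * S * R * (R * S * R)).trace
        = (R * (S * (R * R) * S * R)).trace := by congr 1; simp [Matrix.mul_assoc]
      _ = ((S * (R * R) * S * R) * R).trace := Matrix.trace_mul_comm _ _
      _ = (A⁻¹ * S * A⁻¹ * S).trace := by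
          rw [Matrix.mul_assoc _ R R, hR2]
          rw [show S * A⁻¹ * S * A⁻¹ = S * (A⁻¹ * S * A⁻¹) by simp [Matrix.mul_assoc]]
          rw [Matrix.trace_mul_comm]
  have h1 : (R⁻¹ *ᵥ w) ⬝ᵥ M *ᵥ (R⁻¹ *ᵥ w) = w ⬝ᵥ S *ᵥ w := by
    rw [aux_dot_mulVec_left, hRis, Matrix.mulVec_mulVec, Matrix.mulVec_mulVec, hM]
    rw [show R⁻¹ * (R * S * R) * R⁻¹ = R⁻¹ * R * S * (R * R⁻¹) by simp [Matrix.mul_assoc],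
      hRl, hRr, Matrix.one_mul, Matrix.mul_one]
  have h2 : (R⁻¹ *ᵥ w) ⬝ᵥ (R⁻¹ *ᵥ w) = w ⬝ᵥ A *ᵥ w := by
    rw [aux_dot_mulVec_left, hRis, Matrix.mulVec_mulVec, hRi2]
  have := aux_abs_quad_le hMs (R⁻¹ *ᵥ w)
  rwa [h1, h2, htr] at this

end Aux

set_option maxHeartbeats 1000000 in
lemma aux_quad_eq {U L : ℕ} (Lam : (Fin U → ℝ) →ₗ[ℝ] Matrix (Fin L) (Fin L) ℝ)
    (x v : Fin U → ℝ) :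
    v ⬝ᵥ (hess Lam x).mulVec v
      = ((Lam x)⁻¹ * Lam v * (Lam x)⁻¹ * Lam v).trace := by
  have hv : Lam v = ∑ i, v i • Lam (Pi.single i 1) := by
    have hv0 : v = ∑ i, v i • (Pi.single i 1 : Fin U → ℝ) := by
      ext j
      simp [Pi.single_apply, Finset.sum_apply]
    conv_lhs => rw [hv0]
    rw [map_sum]
    simp [_root_.map_smul]
  conv_rhs => rw [hv]
  simp only [Finset.mul_sum, Finset.sum_mul, Matrix.mul_smul, Matrix.smul_mul,
    Matrix.trace_sum, Matrix.trace_smul, smul_eq_mul]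
  simp only [mulVec, dotProduct, hess, Matrix.of_apply, Finset.mul_sum]
  rw [Finset.sum_comm]
  congr 1; ext i; congr 1; ext j
  ring

set_option maxHeartbeats 1000000 in
/-- self-concordance norm comparison inside the Dikin ellipsoid. -/
theorem stmt1 {U L : ℕ} (hU : 0 < U) (hL : 0 < L)
    (Lam : (Fin U → ℝ) →ₗ[ℝ] Matrix (Fin L) (Fin L) ℝ)
    (hinj : Function.Injective Lam) (hsym : ∀ v, (Lam v).IsSymm)
    (x u : Fin U → ℝ) (hx : (Lam x).PosDef)
    (hu : locNorm Lam x (u - x) < 1)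
    (v : Fin U → ℝ) (hv : v ≠ 0) :
    (1 - locNorm Lam x (u - x)) * locNorm Lam x v ≤ locNorm Lam u v ∧
      locNorm Lam u v ≤ (1 - locNorm Lam x (u - x))⁻¹ * locNorm Lam x v := by
  set A := Lam x with hA
  set B := Lam u with hB
  set S := Lam (u - x) with hS
  set r := locNorm Lam x (u - x) with hr
  have hr0 : 0 ≤ r := Real.sqrt_nonneg _
  have hr1 : r < 1 := hu
  have h1r : 0 < 1 - r := by linarith
  have h1r' : (0:ℝ) < 1 + r := by linarith
  have hSsym : Sᵀ = S := hsym _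
  have hAsym : Aᵀ = A := hsym _
  have hBsym : Bᵀ = B := hsym _
  have hBAS : B = A + S := by
    rw [hS, hA, hB, map_sub]; abel
  have hrq : r = Real.sqrt ((A⁻¹ * S * A⁻¹ * S).trace) := by
    rw [hr, locNorm, aux_quad_eq]
  have hGb : ∀ w, |w ⬝ᵥ S *ᵥ w| ≤ r * (w ⬝ᵥ A *ᵥ w) := fun w => by
    rw [hrq]; exact aux_quad_bound hx hSsym w
  -- the two Loewner bounds
  have psd1 : (B - (1 - r) • A).PosSemidef := by
    refine posSemidef_iff_dotProduct_mulVec.mpr ⟨aux_herm_of_symm ?_, fun w => ?_⟩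
    · rw [Matrix.transpose_sub, Matrix.transpose_smul, hAsym, hBsym]
    · rw [star_trivial, Matrix.sub_mulVec, dotProduct_sub, Matrix.smul_mulVec,
        dotProduct_smul, smul_eq_mul, hBAS, Matrix.add_mulVec, dotProduct_add]
      have h := hGb w
      have h' := neg_abs_le (w ⬝ᵥ S *ᵥ w)
      linarith
  have psd2 : ((1 + r) • A - B).PosSemidef := by
    refine posSemidef_iff_dotProduct_mulVec.mpr ⟨aux_herm_of_symm ?_, fun w => ?_⟩
    · rw [Matrix.transpose_sub, Matrix.transpose_smul, hAsym, hBsym]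
    · rw [star_trivial, Matrix.sub_mulVec, dotProduct_sub, Matrix.smul_mulVec,
        dotProduct_smul, smul_eq_mul, hBAS, Matrix.add_mulVec, dotProduct_add]
      have h := hGb w
      have h' := le_abs_self (w ⬝ᵥ S *ᵥ w)
      linarith
  have hApd1 : ((1 - r) • A).PosDef := aux_pd_smul h1r hx
  have hApd2 : ((1 + r) • A).PosDef := aux_pd_smul h1r' hx
  have hBpd : B.PosDef := by
    have := Matrix.PosDef.add_posSemidef hApd1 psd1
    rwa [add_sub_cancel] at this
  -- inverse of scalar multiples
  have hsmul_inv : ∀ (c : ℝ), c ≠ 0 → (c • A)⁻¹ = c⁻¹ • A⁻¹ := by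
    intro c hc
    refine Matrix.inv_eq_right_inv ?_
    rw [smul_mul_smul_comm, Matrix.mul_nonsing_inv _
      (Matrix.isUnit_iff_isUnit_det _ |>.mp hx.isUnit), mul_inv_cancel₀ hc, one_smul]
  have h4 : ((1 - r)⁻¹ • A⁻¹ - B⁻¹).PosSemidef := by
    have := aux_inv_antitone hApd1 hBpd psd1
    rwa [hsmul_inv _ h1r.ne'] at this
  have h5 : (B⁻¹ - (1 + r)⁻¹ • A⁻¹).PosSemidef := by
    have := aux_inv_antitone hBpd hApd2 psd2
    rwa [hsmul_inv _ h1r'.ne'] at this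
  -- trace comparisons with S' = Lam v
  set T := Lam v with hT
  have hTsym : Tᵀ = T := hsym _
  have hsc : ∀ (c : ℝ) (X : Matrix (Fin L) (Fin L) ℝ),
      ((c • X) * T * (c • X) * T).trace = c ^ 2 * (X * T * X * T).trace := by
    intro c X
    simp only [Matrix.smul_mul, Matrix.mul_smul, Matrix.trace_smul, smul_eq_mul]
    ring
  have hqAnn : 0 ≤ (A⁻¹ * T * A⁻¹ * T).trace :=
    aux_trace_CSDS_nonneg hx.inv.posSemidef hx.inv.posSemidef hTsym
  have hupper : (B⁻¹ * T * B⁻¹ * T).trace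
      ≤ (1 - r)⁻¹ ^ 2 * (A⁻¹ * T * A⁻¹ * T).trace := by
    have := aux_trace_mono hBpd.inv.posSemidef
      (aux_psd_smul (by positivity) hx.inv.posSemidef) h4 hTsym
    rwa [hsc] at this
  have hlower : (1 + r)⁻¹ ^ 2 * (A⁻¹ * T * A⁻¹ * T).trace
      ≤ (B⁻¹ * T * B⁻¹ * T).trace := by
    have := aux_trace_mono (aux_psd_smul (by positivity) hx.inv.posSemidef)
      hBpd.inv.posSemidef h5 hTsym
    rwa [hsc] at this
  have hlocu : locNorm Lam u v = Real.sqrt ((B⁻¹ * T * B⁻¹ * T).trace) := by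
    rw [locNorm, aux_quad_eq]
  have hlocx : locNorm Lam x v = Real.sqrt ((A⁻¹ * T * A⁻¹ * T).trace) := by
    rw [locNorm, aux_quad_eq]
  have hsqrt_smul : ∀ (c : ℝ), 0 ≤ c →
      Real.sqrt (c ^ 2 * (A⁻¹ * T * A⁻¹ * T).trace)
        = c * Real.sqrt ((A⁻¹ * T * A⁻¹ * T).trace) := by
    intro c hc
    rw [Real.sqrt_mul (sq_nonneg c), Real.sqrt_sq hc]
  constructor
  · -- lower bound
    rw [hlocu, hlocx]
    have step1 : (1 - r) * Real.sqrt ((A⁻¹ * T * A⁻¹ * T).trace)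
        ≤ (1 + r)⁻¹ * Real.sqrt ((A⁻¹ * T * A⁻¹ * T).trace) := by
      refine mul_le_mul_of_nonneg_right ?_ (Real.sqrt_nonneg _)
      have hmul : (1 + r) * (1 - r) ≤ (1 + r) * (1 + r)⁻¹ := by
        rw [mul_inv_cancel₀ h1r'.ne']
        nlinarith
      exact le_of_mul_le_mul_left hmul h1r'
    have step2 : (1 + r)⁻¹ * Real.sqrt ((A⁻¹ * T * A⁻¹ * T).trace)
        ≤ Real.sqrt ((B⁻¹ * T * B⁻¹ * T).trace) := by
      rw [← hsqrt_smul _ (by positivity)]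
      exact Real.sqrt_le_sqrt hlower
    linarith
  · -- upper bound
    rw [hlocu, hlocx]
    calc Real.sqrt ((B⁻¹ * T * B⁻¹ * T).trace)
        ≤ Real.sqrt ((1 - r)⁻¹ ^ 2 * (A⁻¹ * T * A⁻¹ * T).trace) :=
          Real.sqrt_le_sqrt hupper
      _ = (1 - r)⁻¹ * Real.sqrt ((A⁻¹ * T * A⁻¹ * T).trace) :=
          hsqrt_smul _ (by positivity)
end

section
/- If Λ(x) and Λ(u) are positive definite and ‖u − x‖_x < 1, then ‖g(u) − g(x)‖*_x ≤ ‖u − x‖_x / (1 − ‖u − x‖_x). -/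
open Matrix

section Aux

lemma lam_eq_sum {U L : ℕ} (Lam : (Fin U → ℝ) →ₗ[ℝ] Matrix (Fin L) (Fin L) ℝ) (v : Fin U → ℝ) :
    Lam v = ∑ i, v i • Lam (Pi.single i 1) := by
  have hv : v = ∑ i, v i • (Pi.single i 1 : Fin U → ℝ) := by
    funext j; simp [Finset.sum_apply, Pi.single_apply]
  conv_lhs => rw [hv]
  rw [map_sum]; simp

lemma dot_hess {U L : ℕ} (Lam : (Fin U → ℝ) →ₗ[ℝ] Matrix (Fin L) (Fin L) ℝ)
    (x v w : Fin U → ℝ) :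
    v ⬝ᵥ (hess Lam x).mulVec w = ((Lam x)⁻¹ * Lam v * (Lam x)⁻¹ * Lam w).trace := by
  conv_rhs => rw [lam_eq_sum Lam v, lam_eq_sum Lam w]
  simp only [Matrix.mul_sum, Matrix.sum_mul, Matrix.mul_smul, Matrix.smul_mul,
    Matrix.trace_sum, Matrix.trace_smul, smul_eq_mul, dotProduct, mulVec, hess,
    Finset.mul_sum, Finset.sum_mul, Matrix.of_apply, smul_smul]
  rw [Finset.sum_comm]
  refine Finset.sum_congr rfl fun i _ => Finset.sum_congr rfl fun j _ => ?_
  ring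

lemma dot_graddiff {U L : ℕ} (Lam : (Fin U → ℝ) →ₗ[ℝ] Matrix (Fin L) (Fin L) ℝ)
    (x u v : Fin U → ℝ) :
    (grad Lam u - grad Lam x) ⬝ᵥ v = (((Lam x)⁻¹ - (Lam u)⁻¹) * Lam v).trace := by
  conv_rhs => rw [lam_eq_sum Lam v]
  simp only [Matrix.mul_sum, Matrix.trace_sum, Matrix.mul_smul, Matrix.trace_smul,
    Matrix.sub_mul, Matrix.trace_sub, dotProduct, grad, Pi.sub_apply, smul_eq_mul]
  refine Finset.sum_congr rfl fun i _ => ?_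
  ring

lemma trace_tmul_self {L : ℕ} (P : Matrix (Fin L) (Fin L) ℝ) :
    (Pᵀ * P).trace = ∑ i, ∑ j, (P i j)^2 := by
  simp [Matrix.trace, Matrix.mul_apply, Matrix.diag, sq]
  exact Finset.sum_comm

lemma sum_sq_pos_of_ne_zero {L : ℕ} {P : Matrix (Fin L) (Fin L) ℝ} (hP : P ≠ 0) :
    0 < ∑ i, ∑ j, (P i j)^2 := by
  have h : ∃ i j, P i j ≠ 0 := by
    by_contra hc
    push_neg at hc
    exact hP (by ext i j; simpa using hc i j)
  obtain ⟨i, j, hij⟩ := h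
  have h1 : 0 < ∑ j', (P i j')^2 :=
    Finset.sum_pos' (fun k _ => sq_nonneg _) ⟨j, Finset.mem_univ j, by positivity⟩
  refine Finset.sum_pos' (fun k _ => Finset.sum_nonneg fun l _ => sq_nonneg _)
    ⟨i, Finset.mem_univ i, h1⟩

lemma trace_conj_sq {n : Type*} [Fintype n] [DecidableEq n]
    (V : Matrix n n ℝ) (hV : V * star V = 1) (e : n → ℝ) :
    ((V * diagonal e * star V) * (V * diagonal e * star V)).trace = ∑ i, (e i)^2 := by
  have hV' : star V * V = 1 := mul_eq_one_comm.mp hV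
  have : (V * diagonal e * star V) * (V * diagonal e * star V)
      = V * (diagonal e * diagonal e) * star V := by
    calc V * diagonal e * star V * (V * diagonal e * star V)
        = V * diagonal e * (star V * V) * diagonal e * star V := by noncomm_ring
      _ = V * (diagonal e * diagonal e) * star V := by rw [hV']; noncomm_ring
  rw [this, Matrix.trace_mul_comm, ← Matrix.mul_assoc, hV', Matrix.one_mul,
    diagonal_mul_diagonal, trace_diagonal]
  simp [sq]

lemma spectral_bound {n : Type*} [Fintype n] [DecidableEq n]
    {M : Matrix n n ℝ} (hM : M.PosDef) {r : ℝ}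
    (h0 : 0 ≤ r) (h1 : r < 1) (htr : ((M - 1) * (M - 1)).trace ≤ r ^ 2) :
    ((1 - M⁻¹) * (1 - M⁻¹)).trace ≤ (r / (1 - r)) ^ 2 := by
  have hH := hM.isHermitian
  set V : Matrix n n ℝ := (hH.eigenvectorUnitary : Matrix n n ℝ) with hVdef
  set d := hH.eigenvalues with hddef
  have hVV : V * star V = 1 := Matrix.mem_unitaryGroup_iff.mp hH.eigenvectorUnitary.2
  have hVV' : star V * V = 1 := mul_eq_one_comm.mp hVV
  have hspec : M = V * diagonal d * star V := by
    have := hH.spectral_theorem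
    simpa using this
  have hdpos : ∀ i, 0 < d i := hM.eigenvalues_pos
  have hM1 : M - 1 = V * diagonal (fun i => d i - 1) * star V := by
    rw [hspec]
    have : (1 : Matrix n n ℝ) = V * diagonal (fun _ => (1:ℝ)) * star V := by
      simp [hVV]
    nth_rewrite 1 [this]
    rw [← Matrix.sub_mul, ← Matrix.mul_sub, diagonal_sub]
  have htr1 : ((M - 1) * (M - 1)).trace = ∑ i, (d i - 1)^2 := by
    rw [hM1, trace_conj_sq V hVV]
  have hMinv : M⁻¹ = V * diagonal (fun i => (d i)⁻¹) * star V := by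
    apply Matrix.inv_eq_right_inv
    rw [hspec]
    have : diagonal d * star V * (V * diagonal (fun i => (d i)⁻¹)) = 1 := by
      rw [Matrix.mul_assoc, ← Matrix.mul_assoc (star V), hVV', Matrix.one_mul,
        diagonal_mul_diagonal]
      rw [show (fun i => d i * (d i)⁻¹) = fun _ => (1:ℝ) from funext fun i =>
        mul_inv_cancel₀ (hdpos i).ne', diagonal_one]
    calc V * diagonal d * star V * (V * diagonal (fun i => (d i)⁻¹) * star V)
        = V * (diagonal d * star V * (V * diagonal (fun i => (d i)⁻¹))) * star V := by
          noncomm_ring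
      _ = 1 := by rw [this, Matrix.mul_one, hVV]
  have hI1 : (1:Matrix n n ℝ) - M⁻¹ = V * diagonal (fun i => 1 - (d i)⁻¹) * star V := by
    rw [hMinv]
    have : (1 : Matrix n n ℝ) = V * diagonal (fun _ => (1:ℝ)) * star V := by simp [hVV]
    nth_rewrite 1 [this]
    rw [← Matrix.sub_mul, ← Matrix.mul_sub, diagonal_sub]
  have htr2 : ((1 - M⁻¹) * (1 - M⁻¹)).trace = ∑ i, (1 - (d i)⁻¹)^2 := by
    rw [hI1, trace_conj_sq V hVV]
  rw [htr2]
  rw [htr1] at htr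
  have hlow : ∀ i, 1 - r ≤ d i := by
    intro i
    have h1i : (d i - 1)^2 ≤ r^2 :=
      le_trans (Finset.single_le_sum (fun j _ => sq_nonneg (d j - 1)) (Finset.mem_univ i)) htr
    nlinarith [h1i, sq_nonneg (d i - 1 + r), sq_nonneg (d i - 1 - r)]
  have hbound : ∀ i, (1 - (d i)⁻¹)^2 ≤ (d i - 1)^2 / (1 - r)^2 := by
    intro i
    have hdi : 0 < d i := hdpos i
    have h1r : 0 < 1 - r := by linarith
    have : 1 - (d i)⁻¹ = (d i - 1) / d i := by field_simp
    rw [this, div_pow]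
    apply div_le_div_of_nonneg_left (sq_nonneg _) (by positivity)
    nlinarith [hlow i]
  calc ∑ i, (1 - (d i)⁻¹)^2 ≤ ∑ i, (d i - 1)^2 / (1 - r)^2 :=
        Finset.sum_le_sum fun i _ => hbound i
    _ = (∑ i, (d i - 1)^2) / (1 - r)^2 := by rw [Finset.sum_div]
    _ ≤ r^2 / (1 - r)^2 := by
        have h1r : (0:ℝ) < (1 - r)^2 := by nlinarith
        gcongr
    _ = (r / (1 - r))^2 := by rw [div_pow]

/-- Cauchy–Schwarz for the trace inner product of symmetric matrices. -/
lemma trace_CS {L : ℕ} {P Q : Matrix (Fin L) (Fin L) ℝ} (hP : P.IsSymm) (hQ : Q.IsSymm) :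
    ((P * Q).trace)^2 ≤ (P * P).trace * (Q * Q).trace := by
  have key : ∀ (R S : Matrix (Fin L) (Fin L) ℝ), S.IsSymm →
      (R * S).trace = ∑ p : Fin L × Fin L, R p.1 p.2 * S p.1 p.2 := by
    intro R S hS
    have h1 : (R * S).trace = ∑ i, ∑ j, R i j * S i j := by
      simp only [Matrix.trace, Matrix.diag, Matrix.mul_apply]
      exact Finset.sum_congr rfl fun i _ => Finset.sum_congr rfl fun j _ => by rw [hS.apply]
    rw [h1, ← Finset.sum_product', Finset.univ_product_univ]
  rw [key P Q hQ, key P P hP, key Q Q hQ]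
  have hPP : ∑ p : Fin L × Fin L, P p.1 p.2 * P p.1 p.2
      = ∑ p : Fin L × Fin L, (P p.1 p.2)^2 := by simp [sq]
  have hQQ : ∑ p : Fin L × Fin L, Q p.1 p.2 * Q p.1 p.2
      = ∑ p : Fin L × Fin L, (Q p.1 p.2)^2 := by simp [sq]
  rw [hPP, hQQ]
  exact Finset.sum_mul_sq_le_sq_mul_sq Finset.univ _ _

end Aux

/-- `‖g(u) − g(x)‖*_x ≤ ‖u − x‖_x / (1 − ‖u − x‖_x)`. -/
theorem stmt5 {U L : ℕ} (hU : 0 < U) (hL : 0 < L)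
    (Lam : (Fin U → ℝ) →ₗ[ℝ] Matrix (Fin L) (Fin L) ℝ)
    (hinj : Function.Injective Lam) (hsym : ∀ v, (Lam v).IsSymm)
    (x u : Fin U → ℝ) (hx : (Lam x).PosDef) (hu : (Lam u).PosDef)
    (h : locNorm Lam x (u - x) < 1) :
    dualNorm Lam x (grad Lam u - grad Lam x)
      ≤ locNorm Lam x (u - x) / (1 - locNorm Lam x (u - x)) := by
  classical
  set A := Lam x with hA
  set B := Lam u with hB
  have hAinv : (A⁻¹).PosDef := hx.inv
  obtain ⟨S, hSS, hSH⟩ : ∃ S : Matrix (Fin L) (Fin L) ℝ, S * S = A⁻¹ ∧ Sᴴ = S :=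
    open scoped MatrixOrder in
    ⟨CFC.sqrt A⁻¹, CFC.sqrt_mul_sqrt_self A⁻¹ hAinv.posSemidef.nonneg,
      (CFC.sqrt_nonneg A⁻¹).isSelfAdjoint⟩
  have hST : Sᵀ = S := hSH
  -- S is invertible
  have hSdet : IsUnit S.det := by
    have h1 : S.det * S.det = (A⁻¹).det := by rw [← Matrix.det_mul, hSS]
    have h2 : (0:ℝ) < (A⁻¹).det := hAinv.det_pos
    have : S.det ≠ 0 := by
      intro h0; rw [h0, mul_zero] at h1; exact h2.ne' h1.symm
    exact this.isUnit
  have hSSinv : S * S⁻¹ = 1 := Matrix.mul_nonsing_inv S hSdet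
  have hSinvS : S⁻¹ * S = 1 := Matrix.nonsing_inv_mul S hSdet
  have hAdet : IsUnit A.det := (Matrix.isUnit_iff_isUnit_det _).mp hx.isUnit
  -- S * A * S = 1
  have hSAS : S * A * S = 1 := by
    have hinvA : A⁻¹ * A = 1 := Matrix.nonsing_inv_mul A hAdet
    have hSinv_eq : S⁻¹ = S * A := by
      apply Matrix.inv_eq_right_inv
      calc S * (S * A) = (S * S) * A := by rw [Matrix.mul_assoc]
        _ = 1 := by rw [hSS, hinvA]
    calc S * A * S = (S * A) * S := rfl
      _ = S⁻¹ * S := by rw [← hSinv_eq]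
      _ = 1 := hSinvS
  -- the map Φ
  set Φ : (Fin U → ℝ) → Matrix (Fin L) (Fin L) ℝ := fun v => S * Lam v * S with hΦdef
  have hΦsymm : ∀ v, (Φ v).IsSymm := by
    intro v
    show (S * Lam v * S)ᵀ = S * Lam v * S
    rw [Matrix.transpose_mul, Matrix.transpose_mul, hST, (hsym v).eq]
    noncomm_ring
  -- quadratic form identity
  have hQF : ∀ v w, v ⬝ᵥ (hess Lam x).mulVec w = (Φ v * Φ w).trace := by
    intro v w
    rw [dot_hess]
    have h1 : A⁻¹ * Lam v * A⁻¹ * Lam w = S * (S * Lam v * S * (S * Lam w)) := by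
      rw [← hSS]; noncomm_ring
    rw [← hA, h1, Matrix.trace_mul_comm]
    congr 1
    show S * Lam v * S * (S * Lam w) * S = Φ v * Φ w
    simp only [hΦdef]
    noncomm_ring
  -- trace(Φv * Φv) as a sum of squares
  have hΦsq : ∀ v, (Φ v * Φ v).trace = ∑ i, ∑ j, (Φ v i j)^2 := by
    intro v
    rw [← trace_tmul_self (Φ v)]
    rw [(hΦsymm v).eq]
  have hQFnn : ∀ v, 0 ≤ v ⬝ᵥ (hess Lam x).mulVec v := by
    intro v
    rw [hQF, hΦsq]
    exact Finset.sum_nonneg fun i _ => Finset.sum_nonneg fun j _ => sq_nonneg _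
  -- hess is positive definite
  have hHess : (hess Lam x).PosDef := by
    refine posDef_iff_dotProduct_mulVec.mpr ⟨?_, fun v hv => ?_⟩
    · show (hess Lam x)ᴴ = hess Lam x
      ext i j
      simp only [conjTranspose_apply, hess, Matrix.of_apply, star_trivial]
      rw [Matrix.mul_assoc (A⁻¹ * Lam (Pi.single j 1)), Matrix.trace_mul_comm, ← hA]
      noncomm_ring
    · have hv' : star v = v := by simp
      rw [hv', hQF, hΦsq]
      have hΦv : Φ v ≠ 0 := by
        intro h0
        apply hv
        apply hinj
        have : Lam v = S⁻¹ * (S * Lam v * S) * S⁻¹ := by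
          calc Lam v = (S⁻¹ * S) * Lam v * (S * S⁻¹) := by rw [hSinvS, hSSinv]; noncomm_ring
            _ = S⁻¹ * (S * Lam v * S) * S⁻¹ := by noncomm_ring
        rw [show (S * Lam v * S) = Φ v from rfl, h0] at this
        simp only [Matrix.mul_zero, Matrix.zero_mul] at this
        rw [this, map_zero]
      exact sum_sq_pos_of_ne_zero hΦv
  have hHdet : IsUnit (hess Lam x).det := (Matrix.isUnit_iff_isUnit_det _).mp hHess.isUnit
  -- the matrix M
  set M : Matrix (Fin L) (Fin L) ℝ := S * B * S with hMdef
  have hMPD : M.PosDef := by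
    refine posDef_iff_dotProduct_mulVec.mpr ⟨?_, fun v hv => ?_⟩
    · show Mᴴ = M
      rw [hMdef, Matrix.conjTranspose_mul, Matrix.conjTranspose_mul, hSH, hu.isHermitian.eq]
      noncomm_ring
    · have hv' : star v = v := by simp
      rw [hv', hMdef]
      have : (S * B * S) *ᵥ v = S *ᵥ (B *ᵥ (S *ᵥ v)) := by
        rw [← Matrix.mulVec_mulVec, ← Matrix.mulVec_mulVec]
      rw [this, Matrix.dotProduct_mulVec v S, show v ᵥ* S = S *ᵥ v by
        conv_lhs => rw [← hST]
        rw [Matrix.vecMul_transpose]]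
      have hSv : S *ᵥ v ≠ 0 := by
        intro h0
        apply hv
        have := congrArg (fun w => S⁻¹ *ᵥ w) h0
        simpa [Matrix.mulVec_mulVec, hSinvS] using this
      have := hu.dotProduct_mulVec_pos hSv
      simpa using this
  -- M - 1 = Φ (u - x)
  have hM1 : M - 1 = Φ (u - x) := by
    rw [hMdef, hΦdef]
    show S * B * S - 1 = S * Lam (u - x) * S
    rw [map_sub, ← hA, ← hB, Matrix.mul_sub, Matrix.sub_mul, hSAS]
  -- B⁻¹ = S * M⁻¹ * S
  have hBdet : IsUnit B.det := (Matrix.isUnit_iff_isUnit_det _).mp hu.isUnit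
  have hMinvB : A⁻¹ - B⁻¹ = S * (1 - M⁻¹) * S := by
    have hMinv : M⁻¹ = S⁻¹ * B⁻¹ * S⁻¹ := by
      rw [hMdef, Matrix.mul_inv_rev, Matrix.mul_inv_rev]
      noncomm_ring
    have hSMS : S * M⁻¹ * S = B⁻¹ := by
      rw [hMinv]
      calc S * (S⁻¹ * B⁻¹ * S⁻¹) * S = (S * S⁻¹) * B⁻¹ * (S⁻¹ * S) := by noncomm_ring
        _ = B⁻¹ := by rw [hSSinv, hSinvS]; noncomm_ring
    rw [Matrix.mul_sub, Matrix.sub_mul, Matrix.mul_one, hSS, hSMS]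
  -- the quantity r
  set r := locNorm Lam x (u - x) with hrdef
  have hr0 : 0 ≤ r := Real.sqrt_nonneg _
  have h1r : 0 < 1 - r := by linarith
  have hr2 : ((M - 1) * (M - 1)).trace = r^2 := by
    rw [hM1, ← hQF]
    rw [hrdef, locNorm, Real.sq_sqrt (hQFnn _)]
  -- spectral bound
  have hC2 : ((1 - M⁻¹) * (1 - M⁻¹)).trace ≤ (r / (1 - r))^2 :=
    spectral_bound hMPD hr0 h (le_of_eq hr2)
  -- symmetry of 1 - M⁻¹
  have hMsymm : M.IsSymm := hMPD.isHermitian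
  have hMinvSymm : (1 - M⁻¹ : Matrix (Fin L) (Fin L) ℝ).IsSymm := by
    show (1 - M⁻¹)ᵀ = 1 - M⁻¹
    rw [Matrix.transpose_sub, Matrix.transpose_one, Matrix.transpose_nonsing_inv, hMsymm.eq]
  -- gradient difference dual pairing
  set t := grad Lam u - grad Lam x with htdef
  have hpair : ∀ v, t ⬝ᵥ v = ((1 - M⁻¹) * Φ v).trace := by
    intro v
    rw [htdef, dot_graddiff, ← hA, ← hB, hMinvB]
    have : S * (1 - M⁻¹) * S * Lam v = S * ((1 - M⁻¹) * (S * Lam v)) := by noncomm_ring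
    rw [this, Matrix.trace_mul_comm]
    congr 1
    show (1 - M⁻¹) * (S * Lam v) * S = (1 - M⁻¹) * Φ v
    rw [hΦdef]
    noncomm_ring
  -- main estimate
  set w := (hess Lam x)⁻¹.mulVec t with hwdef
  set D := t ⬝ᵥ w with hDdef
  have hHw : (hess Lam x).mulVec w = t := by
    rw [hwdef, Matrix.mulVec_mulVec, Matrix.mul_nonsing_inv _ hHdet, Matrix.one_mulVec]
  have hwHw : w ⬝ᵥ (hess Lam x).mulVec w = D := by
    rw [hHw, dotProduct_comm, hDdef]
  have hDnn : 0 ≤ D := by rw [← hwHw]; exact hQFnn w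
  have hDΦ : D = ((1 - M⁻¹) * Φ w).trace := by rw [hDdef, hpair]
  -- Cauchy-Schwarz step
  set C := Real.sqrt (((1 - M⁻¹) * (1 - M⁻¹)).trace) with hCdef
  have hCnn : 0 ≤ C := Real.sqrt_nonneg _
  have hCS : D ≤ C * Real.sqrt D := by
    have h1 : (((1 - M⁻¹) * Φ w).trace)^2
        ≤ ((1 - M⁻¹) * (1 - M⁻¹)).trace * (Φ w * Φ w).trace :=
      trace_CS hMinvSymm (hΦsymm w)
    have h2 : (Φ w * Φ w).trace = D := by rw [← hQF, hwHw]
    rw [h2] at h1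
    have h3 : D^2 ≤ ((1 - M⁻¹) * (1 - M⁻¹)).trace * D := by
      rw [← hDΦ] at h1; exact h1
    calc D ≤ |D| := le_abs_self D
      _ = Real.sqrt (D^2) := (Real.sqrt_sq_eq_abs D).symm
      _ ≤ Real.sqrt (((1 - M⁻¹) * (1 - M⁻¹)).trace * D) := Real.sqrt_le_sqrt h3
      _ = C * Real.sqrt D := by
          have hTnn : 0 ≤ ((1 - M⁻¹) * (1 - M⁻¹)).trace := by
            nth_rewrite 1 [← hMinvSymm.eq]
            rw [trace_tmul_self]
            exact Finset.sum_nonneg fun i _ => Finset.sum_nonneg fun j _ => sq_nonneg _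
          rw [Real.sqrt_mul hTnn D]
  -- conclude
  have hgoal : Real.sqrt D ≤ C := by
    rcases eq_or_lt_of_le hDnn with hD0 | hD0
    · rw [← hD0]; simpa using hCnn
    · have hsD : 0 < Real.sqrt D := Real.sqrt_pos.mpr hD0
      have : Real.sqrt D * Real.sqrt D ≤ C * Real.sqrt D := by
        rw [Real.mul_self_sqrt hDnn]; exact hCS
      exact le_of_mul_le_mul_right this hsD
  have hCle : C ≤ r / (1 - r) := by
    have hrr : 0 ≤ r / (1 - r) := div_nonneg hr0 h1r.le
    calc C = Real.sqrt (((1 - M⁻¹) * (1 - M⁻¹)).trace) := hCdef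
      _ ≤ Real.sqrt ((r / (1 - r))^2) := Real.sqrt_le_sqrt hC2
      _ = |r / (1 - r)| := Real.sqrt_sq_eq_abs _
      _ = r / (1 - r) := abs_of_nonneg hrr
  calc dualNorm Lam x t = Real.sqrt D := rfl
    _ ≤ C := hgoal
    _ ≤ r / (1 - r) := hCle
end

section
/- Suppose Λ(x) is positive definite and let s := −g(x). If t ∈ ℝ^U satisfies ‖t − s‖*_x ≤ 1, then Λ(H(x)⁻¹·t) is positive semidefinite (i.e., x is a dual certificate of t). -/
open Matrix

private lemma rep' {U : ℕ} (v : Fin U → ℝ) :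
    v = ∑ i, v i • (Pi.single i (1:ℝ) : Fin U → ℝ) := by
  have h : ∀ i, v i • (Pi.single i (1:ℝ) : Fin U → ℝ) = Pi.single i (v i) := fun i => by
    rw [← Pi.single_smul, smul_eq_mul, mul_one]
  simp_rw [h, Finset.univ_sum_single]

private lemma hess_bilin {U L : ℕ} (Lam : (Fin U → ℝ) →ₗ[ℝ] Matrix (Fin L) (Fin L) ℝ)
    (x v w : Fin U → ℝ) :
    v ⬝ᵥ (hess Lam x) *ᵥ w = ((Lam x)⁻¹ * Lam v * (Lam x)⁻¹ * Lam w).trace := by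
  conv_rhs => rw [rep' v, rep' w]
  simp only [map_sum, _root_.map_smul, Matrix.mul_sum, Matrix.sum_mul, Matrix.mul_smul,
    Matrix.smul_mul, Matrix.trace_sum, Matrix.trace_smul, smul_eq_mul, smul_smul]
  simp only [dotProduct, mulVec, hess, of_apply, dotProduct, Finset.mul_sum]
  rw [Finset.sum_comm]
  refine Finset.sum_congr rfl fun i _ => Finset.sum_congr rfl fun j _ => by ring

private lemma herm_of_symm {L : ℕ} {M : Matrix (Fin L) (Fin L) ℝ} (h : Mᵀ = M) :
    M.IsHermitian := by
  ext i j
  simpa using congrFun (congrFun h i) j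

private lemma trace_sq_eq {L : ℕ} (M : Matrix (Fin L) (Fin L) ℝ) (h : Mᵀ = M) :
    (M * M).trace = ∑ i, ∑ j, (M i j) ^ 2 := by
  simp only [Matrix.trace, Matrix.mul_apply, Matrix.diag]
  refine Finset.sum_congr rfl fun i _ => Finset.sum_congr rfl fun j _ => ?_
  have : M j i = M i j := by simpa using congrFun (congrFun h i) j
  rw [this]; ring

/-- if `s = -g(x)` and `‖t − s‖*_x ≤ 1`, then `Λ(H(x)⁻¹t) ⪰ 0`,
i.e. `x` is a dual certificate of `t`. -/
theorem stmt8 {U L : ℕ} (hU : 0 < U) (hL : 0 < L)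
    (Lam : (Fin U → ℝ) →ₗ[ℝ] Matrix (Fin L) (Fin L) ℝ)
    (hinj : Function.Injective Lam) (hsym : ∀ v, (Lam v).IsSymm)
    (x : Fin U → ℝ) (hx : (Lam x).PosDef)
    (s : Fin U → ℝ) (hs : s = -grad Lam x)
    (t : Fin U → ℝ) (ht : dualNorm Lam x (t - s) ≤ 1) :
    (Lam ((hess Lam x)⁻¹.mulVec t)).PosSemidef := by
  classical
  set A := Lam x with hAdef
  have hdetA : IsUnit A.det := isUnit_iff_ne_zero.mpr (ne_of_gt hx.det_pos)
  have hAinvPD : (A⁻¹).PosDef := hx.inv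
  obtain ⟨B, hBB, hBsym⟩ : ∃ B : Matrix (Fin L) (Fin L) ℝ, B * B = A⁻¹ ∧ Bᵀ = B := by
    open MatrixOrder in
    refine ⟨CFC.sqrt A⁻¹, CFC.sqrt_mul_sqrt_self A⁻¹ hAinvPD.posSemidef.nonneg, ?_⟩
    open MatrixOrder in
    have h := (CFC.sqrt_nonneg A⁻¹).posSemidef.isHermitian
    ext i j
    simpa using congrFun (congrFun h i) j
  have hdetB : IsUnit B.det := by
    have h1 : B.det * B.det = A⁻¹.det := by rw [← Matrix.det_mul, hBB]
    have h2 : A⁻¹.det ≠ 0 := ne_of_gt hAinvPD.det_pos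
    refine isUnit_iff_ne_zero.mpr fun h0 => h2 ?_
    rw [← h1, h0, mul_zero]
  -- Φ(v) := B * Λ(v) * B is symmetric
  have phisym : ∀ v, (B * Lam v * B)ᵀ = B * Lam v * B := fun v => by
    simp [Matrix.transpose_mul, hBsym, (hsym v).eq, mul_assoc]
  -- the bilinear form equals the Frobenius inner product of Φ's
  have key : ∀ v w : Fin U → ℝ,
      v ⬝ᵥ (hess Lam x) *ᵥ w = ((B * Lam v * B) * (B * Lam w * B)).trace := by
    intro v w
    rw [hess_bilin, ← hAdef, ← hBB]
    have e1 : B * B * Lam v * (B * B) * Lam w = B * ((B * Lam v * B) * (B * Lam w)) := by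
      simp only [mul_assoc]
    rw [e1, Matrix.trace_mul_comm]
    congr 1
    simp only [mul_assoc]
  -- Λ(v) recovered from Φ(v)
  have recov : ∀ v, B⁻¹ * (B * Lam v * B) * B⁻¹ = Lam v := fun v => by
    have e : B⁻¹ * (B * Lam v * B) * B⁻¹ = (B⁻¹ * B) * Lam v * (B * B⁻¹) := by
      simp only [mul_assoc]
    rw [e, Matrix.nonsing_inv_mul _ hdetB, Matrix.mul_nonsing_inv _ hdetB, one_mul, mul_one]
  -- the Hessian is positive definite
  have hHpd : (hess Lam x).PosDef := by
    refine Matrix.PosDef.of_dotProduct_mulVec_pos ?_ ?_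
    · refine herm_of_symm ?_
      ext i j
      simp only [Matrix.transpose_apply, hess, Matrix.of_apply]
      calc ((Lam x)⁻¹ * Lam (Pi.single j 1) * (Lam x)⁻¹ * Lam (Pi.single i 1)).trace
          = (((Lam x)⁻¹ * Lam (Pi.single j 1)) * ((Lam x)⁻¹ * Lam (Pi.single i 1))).trace := by
            congr 1; simp only [mul_assoc]
        _ = (((Lam x)⁻¹ * Lam (Pi.single i 1)) * ((Lam x)⁻¹ * Lam (Pi.single j 1))).trace :=
            Matrix.trace_mul_comm _ _
        _ = ((Lam x)⁻¹ * Lam (Pi.single i 1) * (Lam x)⁻¹ * Lam (Pi.single j 1)).trace := by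
            congr 1; simp only [mul_assoc]
    · intro v hv
      have hst : (star v : Fin U → ℝ) = v := by simp
      rw [hst, key v v, trace_sq_eq _ (phisym v)]
      have hnz : B * Lam v * B ≠ 0 := by
        intro h0
        apply hv
        have : Lam v = 0 := by rw [← recov v, h0, mul_zero, zero_mul]
        exact hinj (by rw [this, map_zero])
      have hnn : ∀ i ∈ Finset.univ, (0:ℝ) ≤ ∑ j, ((B * Lam v * B) i j) ^ 2 :=
        fun i _ => Finset.sum_nonneg fun j _ => sq_nonneg _
      rcases lt_or_eq_of_le (Finset.sum_nonneg hnn) with h | h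
      · exact h
      · exfalso
        apply hnz
        ext i j
        have h1 := (Finset.sum_eq_zero_iff_of_nonneg hnn).mp h.symm i (Finset.mem_univ i)
        have h2 := (Finset.sum_eq_zero_iff_of_nonneg
          (fun j _ => sq_nonneg ((B * Lam v * B) i j))).mp h1 j (Finset.mem_univ j)
        simpa using pow_eq_zero_iff (n := 2) (by norm_num) |>.mp h2
  have hdetH : IsUnit (hess Lam x).det := isUnit_iff_ne_zero.mpr (ne_of_gt hHpd.det_pos)
  set w := (hess Lam x)⁻¹ *ᵥ t with hwdef
  have hHw : (hess Lam x) *ᵥ w = t := by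
    rw [hwdef, Matrix.mulVec_mulVec, Matrix.mul_nonsing_inv _ hdetH, Matrix.one_mulVec]
  -- H x = s
  have hHx : (hess Lam x) *ᵥ x = s := by
    funext i
    have h1 := hess_bilin Lam x (Pi.single i 1) x
    have h2 : (Pi.single i 1 : Fin U → ℝ) ⬝ᵥ (hess Lam x) *ᵥ x = ((hess Lam x) *ᵥ x) i := by
      simp [dotProduct, Pi.single_apply]
    have h3 : ((Lam x)⁻¹ * Lam (Pi.single i 1) * (Lam x)⁻¹ * Lam x).trace
        = ((Lam x)⁻¹ * Lam (Pi.single i 1)).trace := by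
      rw [mul_assoc, Matrix.nonsing_inv_mul _ hdetA, mul_one]
    rw [hs]
    simp only [Pi.neg_apply, grad, neg_neg]
    rw [← h3, ← h1, h2]
  -- Φ(x) = 1
  have hPhix : B * Lam x * B = 1 := by
    have h1 : (B * A * B) * B = B := by
      have e : (B * A * B) * B = B * (A * (B * B)) := by simp only [mul_assoc]
      rw [e, hBB, Matrix.mul_nonsing_inv _ hdetA, mul_one]
    calc B * Lam x * B = (B * A * B) * (B * B⁻¹) := by
          rw [Matrix.mul_nonsing_inv _ hdetB, mul_one, hAdef]
      _ = ((B * A * B) * B) * B⁻¹ := by simp only [mul_assoc]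
      _ = B * B⁻¹ := by rw [h1]
      _ = 1 := Matrix.mul_nonsing_inv _ hdetB
  -- u := w - x ; N := Φ(u) = Φ(w) - 1
  set u := w - x with hudef
  set N := B * Lam w * B - 1 with hNdef
  have hNeq : B * Lam u * B = N := by
    rw [hudef, hNdef, map_sub, mul_sub, sub_mul, hPhix]
  have hNsym : Nᵀ = N := by
    rw [← hNeq]; exact phisym u
  -- the dual-norm quantity equals tr(N²)
  have hq : (t - s) ⬝ᵥ (hess Lam x)⁻¹ *ᵥ (t - s) = (N * N).trace := by
    have hts : (hess Lam x) *ᵥ u = t - s := by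
      rw [hudef, Matrix.mulVec_sub, hHw, hHx]
    have hu : (hess Lam x)⁻¹ *ᵥ (t - s) = u := by
      rw [← hts, Matrix.mulVec_mulVec, Matrix.nonsing_inv_mul _ hdetH, Matrix.one_mulVec]
    rw [hu, ← hts, dotProduct_comm, key u u, hNeq]
  have hqnn : (0:ℝ) ≤ (N * N).trace := by
    rw [trace_sq_eq _ hNsym]
    exact Finset.sum_nonneg fun i _ => Finset.sum_nonneg fun j _ => sq_nonneg _
  have hq1 : (N * N).trace ≤ 1 := by
    have h1 : Real.sqrt ((N * N).trace) ≤ 1 := by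
      have := ht
      rw [dualNorm, hq] at this
      exact this
    nlinarith [Real.sq_sqrt hqnn, Real.sqrt_nonneg ((N * N).trace)]
  -- Φ(w) is PSD
  have hPhiPSD : (B * Lam w * B).PosSemidef := by
    refine Matrix.PosSemidef.of_dotProduct_mulVec_nonneg (herm_of_symm (phisym w)) fun z => ?_
    have hst : (star z : Fin L → ℝ) = z := by simp
    have hsplit : B * Lam w * B = 1 + N := by rw [hNdef]; abel
    rw [hst, hsplit, Matrix.add_mulVec, Matrix.one_mulVec, dotProduct_add]
    set S := z ⬝ᵥ N *ᵥ z with hSdef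
    set P := z ⬝ᵥ z with hPdef
    have hP : (0:ℝ) ≤ P := by
      rw [hPdef]; exact Finset.sum_nonneg fun i _ => mul_self_nonneg _
    -- Cauchy-Schwarz: S² ≤ P² * tr(N²)
    have hCS : S ^ 2 ≤ P ^ 2 * (N * N).trace := by
      have hS : S = ∑ p ∈ (Finset.univ ×ˢ Finset.univ : Finset (Fin L × Fin L)),
          (z p.1 * z p.2) * N p.1 p.2 := by
        rw [hSdef, Finset.sum_product]
        simp only [dotProduct, mulVec, dotProduct, Finset.mul_sum]
        exact Finset.sum_congr rfl fun i _ => Finset.sum_congr rfl fun j _ => by ring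
      have hcs := Finset.sum_mul_sq_le_sq_mul_sq
        (Finset.univ ×ˢ Finset.univ : Finset (Fin L × Fin L))
        (fun p => z p.1 * z p.2) (fun p => N p.1 p.2)
      have e1 : ∑ p ∈ (Finset.univ ×ˢ Finset.univ : Finset (Fin L × Fin L)),
          (z p.1 * z p.2) ^ 2 = P ^ 2 := by
        rw [Finset.sum_product, hPdef]
        simp only [dotProduct, mul_pow, ← Finset.sum_mul, ← Finset.mul_sum]
        rw [sq]
        congr 1 <;> exact Finset.sum_congr rfl fun i _ => by ring
      have e2 : ∑ p ∈ (Finset.univ ×ˢ Finset.univ : Finset (Fin L × Fin L)),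
          (N p.1 p.2) ^ 2 = (N * N).trace := by
        rw [Finset.sum_product, trace_sq_eq _ hNsym]
      rw [hS]
      calc (∑ p ∈ (Finset.univ ×ˢ Finset.univ : Finset (Fin L × Fin L)),
            (z p.1 * z p.2) * N p.1 p.2) ^ 2
          ≤ (∑ p ∈ (Finset.univ ×ˢ Finset.univ : Finset (Fin L × Fin L)), (z p.1 * z p.2) ^ 2)
            * ∑ p ∈ (Finset.univ ×ˢ Finset.univ : Finset (Fin L × Fin L)), (N p.1 p.2) ^ 2 :=
            hcs
        _ = P ^ 2 * (N * N).trace := by rw [e1, e2]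
    nlinarith [hCS, hq1, hqnn, hP, sq_nonneg S, sq_nonneg (S + P)]
  -- transfer PSD from Φ(w) back to Λ(w)
  have hBinvH : (B⁻¹)ᴴ = B⁻¹ := by
    have h1 : (B⁻¹)ᴴ = (B⁻¹)ᵀ := by
      ext i j; simp [Matrix.conjTranspose_apply, Matrix.transpose_apply]
    rw [h1, Matrix.transpose_nonsing_inv, hBsym]
  have hfinal := hPhiPSD.mul_mul_conjTranspose_same B⁻¹
  rw [hBinvH] at hfinal
  have heq : B⁻¹ * (B * Lam w * B) * B⁻¹ = Lam w := recov w
  rw [heq] at hfinal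
  exact hfinal
end

section
/- Suppose Λ(x) and Λ(y) are positive definite, let t := −g(y), and suppose ‖x − y‖_x < 1/2. Then Λ(H(x)⁻¹·t) is positive semidefinite (i.e., x certifies t, the vector whose gradient certificate is y). -/
open Matrix

section Helpers

variable {L : ℕ}

lemma real_ct (A : Matrix (Fin L) (Fin L) ℝ) : Aᴴ = Aᵀ := by
  ext i j; simp [Matrix.conjTranspose_apply]

lemma herm_of_t {A : Matrix (Fin L) (Fin L) ℝ} (h : Aᵀ = A) : A.IsHermitian := by
  unfold Matrix.IsHermitian; rw [real_ct]; exact h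

lemma t_of_herm {A : Matrix (Fin L) (Fin L) ℝ} (h : A.IsHermitian) : Aᵀ = A := by
  rw [← real_ct]; exact h

lemma vec_decomp {U : ℕ} (w : Fin U → ℝ) :
    w = ∑ i, w i • (Pi.single i 1 : Fin U → ℝ) := by
  ext j
  simp [Pi.single_apply, Finset.sum_apply]

lemma trace_expand1 {U : ℕ} (Lam : (Fin U → ℝ) →ₗ[ℝ] Matrix (Fin L) (Fin L) ℝ)
    (A : Matrix (Fin L) (Fin L) ℝ) (w : Fin U → ℝ) :
    (A * Lam w).trace = ∑ i, w i * (A * Lam (Pi.single i 1)).trace := by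
  conv_lhs => rw [vec_decomp w]
  rw [map_sum]
  rw [Matrix.mul_sum, Matrix.trace_sum]
  refine Finset.sum_congr rfl fun i _ => ?_
  rw [_root_.map_smul, Matrix.mul_smul, Matrix.trace_smul]
  rfl

lemma trace_expand2 {U : ℕ} (Lam : (Fin U → ℝ) →ₗ[ℝ] Matrix (Fin L) (Fin L) ℝ)
    (A B : Matrix (Fin L) (Fin L) ℝ) (v w : Fin U → ℝ) :
    (A * Lam v * B * Lam w).trace
      = ∑ i, ∑ j, v i * (w j * (A * Lam (Pi.single i 1) * B * Lam (Pi.single j 1)).trace) := by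
  rw [trace_expand1 Lam (A * Lam v * B) w]
  rw [Finset.sum_comm]
  refine Finset.sum_congr rfl fun j _ => ?_
  have : A * Lam v * B * Lam (Pi.single j 1)
      = (A * Lam v) * (B * Lam (Pi.single j 1)) := by noncomm_ring
  rw [this, Matrix.trace_mul_comm]
  have : B * Lam (Pi.single j 1) * (A * Lam v) = (B * Lam (Pi.single j 1) * A) * Lam v := by
    noncomm_ring
  rw [this, trace_expand1 Lam (B * Lam (Pi.single j 1) * A) v]
  rw [Finset.mul_sum]
  refine Finset.sum_congr rfl fun i _ => ?_
  have : B * Lam (Pi.single j 1) * A * Lam (Pi.single i 1)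
      = (B * Lam (Pi.single j 1)) * (A * Lam (Pi.single i 1)) := by noncomm_ring
  rw [this, Matrix.trace_mul_comm]
  have : A * Lam (Pi.single i 1) * (B * Lam (Pi.single j 1))
      = A * Lam (Pi.single i 1) * B * Lam (Pi.single j 1) := by noncomm_ring
  rw [this]; ring

lemma trace_mul_symm_entrywise (K B : Matrix (Fin L) (Fin L) ℝ) (hB : Bᵀ = B) :
    (K * B).trace = ∑ p : Fin L × Fin L, K p.1 p.2 * B p.1 p.2 := by
  rw [Fintype.sum_prod_type]
  simp only [Matrix.trace, Matrix.diag, Matrix.mul_apply]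
  refine Finset.sum_congr rfl fun i _ => Finset.sum_congr rfl fun j _ => ?_
  conv_lhs => rw [← hB]
  rw [Matrix.transpose_apply]

lemma trace_sq_nonneg (K : Matrix (Fin L) (Fin L) ℝ) (hK : Kᵀ = K) :
    0 ≤ (K * K).trace := by
  rw [trace_mul_symm_entrywise K K hK]
  exact Finset.sum_nonneg fun p _ => mul_self_nonneg _

lemma trace_sq_zero (K : Matrix (Fin L) (Fin L) ℝ) (hK : Kᵀ = K)
    (h : (K * K).trace = 0) : K = 0 := by
  rw [trace_mul_symm_entrywise K K hK] at h
  ext i j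
  have := (Finset.sum_eq_zero_iff_of_nonneg (fun p _ => mul_self_nonneg (K p.1 p.2))).mp h
    (i, j) (Finset.mem_univ _)
  simpa [mul_self_eq_zero] using this

lemma trace_cauchy_schwarz (A B : Matrix (Fin L) (Fin L) ℝ)
    (hA : Aᵀ = A) (hB : Bᵀ = B) :
    ((A * B).trace) ^ 2 ≤ (A * A).trace * (B * B).trace := by
  rw [trace_mul_symm_entrywise A B hB, trace_mul_symm_entrywise A A hA,
    trace_mul_symm_entrywise B B hB]
  have := Finset.sum_mul_sq_le_sq_mul_sq Finset.univ
    (fun p : Fin L × Fin L => A p.1 p.2) (fun p => B p.1 p.2)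
  simpa [pow_two] using this

lemma spectral_facts (C : Matrix (Fin L) (Fin L) ℝ) (hC : C.IsHermitian) :
    ∃ (d : Fin L → ℝ) (P : (Fin L → ℝ) → Matrix (Fin L) (Fin L) ℝ),
      C = P d ∧ (∀ f g, P f * P g = P (fun i => f i * g i)) ∧
      (∀ f, (P f).trace = ∑ i, f i) ∧
      P (fun _ => 1) = 1 ∧ (∀ f g, P f - P g = P (fun i => f i - g i)) ∧
      (∀ f g, P f + P g = P (fun i => f i + g i)) ∧
      (∀ f, (P f)ᵀ = P f) ∧
      (∀ f, (∀ i, 0 ≤ f i) → (P f).PosSemidef) := by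
  classical
  set V : Matrix (Fin L) (Fin L) ℝ := (hC.eigenvectorUnitary : Matrix (Fin L) (Fin L) ℝ) with hV
  have hVmem := (hC.eigenvectorUnitary).2
  have hVV : V * Vᴴ = 1 := by
    rw [← Matrix.star_eq_conjTranspose]
    exact (Matrix.mem_unitaryGroup_iff).mp hVmem
  have hVV' : Vᴴ * V = 1 := by
    rw [← Matrix.star_eq_conjTranspose]
    exact (Matrix.mem_unitaryGroup_iff').mp hVmem
  refine ⟨hC.eigenvalues, fun f => V * Matrix.diagonal f * Vᴴ, ?_, ?_, ?_, ?_, ?_, ?_, ?_, ?_⟩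
  · have := hC.spectral_theorem
    simpa [Matrix.star_eq_conjTranspose] using this
  · intro f g
    have : (V * Matrix.diagonal f * Vᴴ) * (V * Matrix.diagonal g * Vᴴ)
        = V * (Matrix.diagonal f * (Vᴴ * V) * Matrix.diagonal g) * Vᴴ := by
      noncomm_ring
    rw [this, hVV', mul_one, Matrix.diagonal_mul_diagonal]
  · intro f
    rw [Matrix.trace_mul_comm, ← mul_assoc, hVV', one_mul, Matrix.trace_diagonal]
  · show V * Matrix.diagonal (fun _ => (1:ℝ)) * Vᴴ = 1
    have : Matrix.diagonal (fun _ => (1:ℝ)) = (1 : Matrix (Fin L) (Fin L) ℝ) :=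
      Matrix.diagonal_one
    rw [this, mul_one, hVV]
  · intro f g
    show _ = V * Matrix.diagonal (fun i => f i - g i) * Vᴴ
    have : Matrix.diagonal (fun i => f i - g i)
        = Matrix.diagonal f - Matrix.diagonal g := by rw [Matrix.diagonal_sub]
    rw [this, Matrix.mul_sub, Matrix.sub_mul]
  · intro f g
    show _ = V * Matrix.diagonal (fun i => f i + g i) * Vᴴ
    have : Matrix.diagonal (fun i => f i + g i)
        = Matrix.diagonal f + Matrix.diagonal g := by rw [Matrix.diagonal_add]
    rw [this, Matrix.mul_add, Matrix.add_mul]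
  · intro f
    refine t_of_herm ?_
    have hd : (Matrix.diagonal f).IsHermitian := Matrix.isHermitian_diagonal _
    exact Matrix.isHermitian_mul_mul_conjTranspose V hd
  · intro f hf
    have hd : (Matrix.diagonal f).PosSemidef := Matrix.posSemidef_diagonal_iff.mpr hf
    exact hd.mul_mul_conjTranspose_same V

lemma inverse_perturb (D : Matrix (Fin L) (Fin L) ℝ) (hD : Dᵀ = D) {r : ℝ}
    (hr0 : 0 ≤ r) (hr : r < 1) (htr : (D * D).trace ≤ r ^ 2) :
    ∃ N : Matrix (Fin L) (Fin L) ℝ, (1 + D) * N = 1 ∧ N * (1 + D) = 1 ∧ Nᵀ = N ∧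
      ((N - 1) * (N - 1)).trace ≤ (r / (1 - r)) ^ 2 := by
  obtain ⟨d, P, hPd, hPmul, hPtr, hPone, hPsub, hPadd, hPT, hPpsd⟩ :=
    spectral_facts D (herm_of_t hD)
  have htr' : (D * D).trace = ∑ i, d i ^ 2 := by
    rw [hPd, hPmul, hPtr]
    exact Finset.sum_congr rfl fun i _ => (pow_two _).symm
  have hsum : (∑ i, d i ^ 2) ≤ r ^ 2 := htr' ▸ htr
  have hdbd : ∀ i, |d i| ≤ r := by
    intro i
    have h1 : d i ^ 2 ≤ r ^ 2 :=
      le_trans (Finset.single_le_sum (fun j _ => sq_nonneg (d j)) (Finset.mem_univ i)) hsum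
    calc |d i| = Real.sqrt (d i ^ 2) := (Real.sqrt_sq_eq_abs _).symm
      _ ≤ Real.sqrt (r ^ 2) := Real.sqrt_le_sqrt h1
      _ = r := Real.sqrt_sq hr0
  have hpos : ∀ i, 1 - r ≤ 1 + d i := by
    intro i
    have := (abs_le.mp (hdbd i)).1
    linarith
  have h1r : (0:ℝ) < 1 - r := by linarith
  have hne : ∀ i, 1 + d i ≠ 0 := fun i => by have := hpos i; linarith
  have hE : 1 + D = P (fun i => 1 + d i) := by
    rw [hPd, ← hPone, hPadd]
  refine ⟨P (fun i => (1 + d i)⁻¹), ?_, ?_, hPT _, ?_⟩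
  · rw [hE, hPmul,
      show (fun i => (1 + d i) * (1 + d i)⁻¹) = (fun _ : Fin L => (1:ℝ)) from
        funext fun i => mul_inv_cancel₀ (hne i), hPone]
  · rw [hE, hPmul,
      show (fun i => (1 + d i)⁻¹ * (1 + d i)) = (fun _ : Fin L => (1:ℝ)) from
        funext fun i => inv_mul_cancel₀ (hne i), hPone]
  · rw [← hPone, hPsub, hPmul, hPtr]
    have hbd : ∀ i, ((1 + d i)⁻¹ - 1) * ((1 + d i)⁻¹ - 1) ≤ d i ^ 2 / (1 - r) ^ 2 := by
      intro i
      have hni := hne i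
      have hpi := hpos i
      have h0i : (0:ℝ) < 1 + d i := lt_of_lt_of_le h1r hpi
      have hval : (1 + d i)⁻¹ - 1 = -(d i) / (1 + d i) := by
        field_simp
        ring
      rw [hval]
      have : -(d i) / (1 + d i) * (-(d i) / (1 + d i)) = d i ^ 2 / (1 + d i) ^ 2 := by
        field_simp
      rw [this]
      apply div_le_div_of_nonneg_left (sq_nonneg _) (by positivity)
      exact pow_le_pow_left₀ (le_of_lt h1r) hpi 2
    calc (∑ i, ((1 + d i)⁻¹ - 1) * ((1 + d i)⁻¹ - 1))
        ≤ ∑ i, d i ^ 2 / (1 - r) ^ 2 := Finset.sum_le_sum fun i _ => hbd i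
      _ = (∑ i, d i ^ 2) / (1 - r) ^ 2 := by rw [Finset.sum_div]
      _ ≤ r ^ 2 / (1 - r) ^ 2 := by
          apply div_le_div_of_nonneg_right hsum (by positivity)
      _ = (r / (1 - r)) ^ 2 := by rw [div_pow]

lemma psd_of_near_one (K : Matrix (Fin L) (Fin L) ℝ) (hK : Kᵀ = K)
    (h : ((K - 1) * (K - 1)).trace < 1) : K.PosSemidef := by
  obtain ⟨μ, P, hPd, hPmul, hPtr, hPone, hPsub, hPadd, hPT, hPpsd⟩ :=
    spectral_facts K (herm_of_t hK)
  have hK1 : K - 1 = P (fun i => μ i - 1) := by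
    rw [hPd, ← hPone, hPsub]
  have htr : ((K - 1) * (K - 1)).trace = ∑ i, (μ i - 1) ^ 2 := by
    rw [hK1, hPmul, hPtr]
    exact Finset.sum_congr rfl fun i _ => (pow_two _).symm
  rw [htr] at h
  have : ∀ i, 0 ≤ μ i := by
    intro i
    have h1 : (μ i - 1) ^ 2 < 1 :=
      lt_of_le_of_lt (Finset.single_le_sum (fun j _ => sq_nonneg (μ j - 1))
        (Finset.mem_univ i)) h
    nlinarith [sq_nonneg (μ i - 1)]
  rw [hPd]
  exact hPpsd _ this

end Helpers

set_option maxHeartbeats 1000000 in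
/-- if `t = -g(y)` and `‖x − y‖_x < 1/2` then `x` certifies `t`. -/
theorem stmt10 {U L : ℕ} (hU : 0 < U) (hL : 0 < L)
    (Lam : (Fin U → ℝ) →ₗ[ℝ] Matrix (Fin L) (Fin L) ℝ)
    (hinj : Function.Injective Lam) (hsym : ∀ v, (Lam v).IsSymm)
    (x y : Fin U → ℝ) (hx : (Lam x).PosDef) (hy : (Lam y).PosDef)
    (t : Fin U → ℝ) (ht : t = -grad Lam y)
    (h : locNorm Lam x (x - y) < 1 / 2) :
    (Lam ((hess Lam x)⁻¹.mulVec t)).PosSemidef := by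
  classical
  have hsymT : ∀ v, (Lam v)ᵀ = Lam v := fun v => hsym v
  open scoped MatrixOrder Matrix.Norms.L2Operator in
  set R := CFC.sqrt (Lam x) with hRdef
  have hRR : R * R = Lam x := by
    open scoped MatrixOrder Matrix.Norms.L2Operator in
    exact CFC.sqrt_mul_sqrt_self _ hx.posSemidef.nonneg
  have hRherm : R.IsHermitian := by
    open scoped MatrixOrder Matrix.Norms.L2Operator in
    exact (CFC.sqrt_nonneg (Lam x)).posSemidef.isHermitian
  have hdet : IsUnit R.det := by
    refine Ne.isUnit fun h0 => ?_
    have : (Lam x).det = 0 := by rw [← hRR, Matrix.det_mul, h0, mul_zero]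
    exact hx.det_pos.ne' this
  set S := R⁻¹ with hSdef
  have hRS : R * S = 1 := Matrix.mul_nonsing_inv R hdet
  have hSR : S * R = 1 := Matrix.nonsing_inv_mul R hdet
  have hST : Sᵀ = S := by
    rw [hSdef, Matrix.transpose_nonsing_inv, t_of_herm hRherm]
  have hxinv : (Lam x)⁻¹ = S * S := by
    rw [← hRR, Matrix.mul_inv_rev]
  have hMT : ∀ v, (S * Lam v * S)ᵀ = S * Lam v * S := by
    intro v
    rw [Matrix.transpose_mul, Matrix.transpose_mul, hST, hsymT v, mul_assoc]
  have hRMR : ∀ v, R * (S * Lam v * S) * R = Lam v := by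
    intro v
    have e : R * (S * Lam v * S) * R = (R * S) * Lam v * (S * R) := by noncomm_ring
    rw [e, hRS, hSR, one_mul, mul_one]
  have hMx : S * Lam x * S = 1 := by
    rw [← hRR]
    have e : S * (R * R) * S = (S * R) * (R * S) := by noncomm_ring
    rw [e, hSR, hRS, one_mul]
  -- quadratic identity
  have quad : ∀ v w, v ⬝ᵥ (hess Lam x).mulVec w = ((S * Lam v * S) * (S * Lam w * S)).trace := by
    intro v w
    have e1 : v ⬝ᵥ (hess Lam x).mulVec w
        = ((Lam x)⁻¹ * Lam v * (Lam x)⁻¹ * Lam w).trace := by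
      rw [trace_expand2 Lam ((Lam x)⁻¹) ((Lam x)⁻¹) v w]
      simp only [dotProduct, Matrix.mulVec, hess, Matrix.of_apply, Finset.mul_sum]
      exact Finset.sum_congr rfl fun i _ => Finset.sum_congr rfl fun j _ => by ring
    rw [e1, hxinv]
    have e2 : S * S * Lam v * (S * S) * Lam w = S * (S * Lam v * S * S * Lam w) := by
      noncomm_ring
    rw [e2, Matrix.trace_mul_comm]
    have e3 : S * Lam v * S * S * Lam w * S = (S * Lam v * S) * (S * Lam w * S) := by
      noncomm_ring
    rw [e3]
  -- Hessian is positive definite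
  have hessHerm : (hess Lam x).IsHermitian := by
    refine herm_of_t ?_
    ext i j
    show hess Lam x j i = hess Lam x i j
    simp only [hess, Matrix.of_apply]
    have e : (Lam x)⁻¹ * Lam (Pi.single j 1) * (Lam x)⁻¹ * Lam (Pi.single i 1)
        = ((Lam x)⁻¹ * Lam (Pi.single j 1)) * ((Lam x)⁻¹ * Lam (Pi.single i 1)) := by
      noncomm_ring
    rw [e, Matrix.trace_mul_comm]
    congr 1
    noncomm_ring
  have hessPD : (hess Lam x).PosDef := by
    refine Matrix.PosDef.of_dotProduct_mulVec_pos hessHerm fun v hv => ?_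
    have hsv : star v = v := by funext i; exact star_trivial _
    rw [hsv]
    have hq := quad v v
    have h0 : 0 ≤ ((S * Lam v * S) * (S * Lam v * S)).trace := trace_sq_nonneg _ (hMT v)
    rcases h0.lt_or_eq with hlt | heq
    · show 0 < v ⬝ᵥ (hess Lam x) *ᵥ v
      rw [hq]; exact hlt
    · exfalso
      have hK0 : S * Lam v * S = 0 := trace_sq_zero _ (hMT v) heq.symm
      have : Lam v = 0 := by
        rw [← hRMR v, hK0, Matrix.mul_zero, Matrix.zero_mul]
      exact hv (hinj (by rw [this, map_zero]))
  have hdetH : IsUnit (hess Lam x).det := hessPD.det_pos.ne'.isUnit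
  set v := (hess Lam x)⁻¹.mulVec t with hvdef
  have hHv : (hess Lam x) *ᵥ v = t := by
    rw [hvdef, Matrix.mulVec_mulVec, Matrix.mul_nonsing_inv _ hdetH, Matrix.one_mulVec]
  -- t entries
  have htE : ∀ i, t i = ((Lam y)⁻¹ * Lam (Pi.single i 1)).trace := by
    intro i; rw [ht]; simp [grad]
  have hdual : ∀ w, w ⬝ᵥ t = ((Lam y)⁻¹ * Lam w).trace := by
    intro w
    rw [trace_expand1 Lam ((Lam y)⁻¹) w]
    simp only [dotProduct]
    exact Finset.sum_congr rfl fun i _ => by rw [htE i]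
  -- D and q, r
  have hDT : (S * Lam (y - x) * S)ᵀ = S * Lam (y - x) * S := hMT (y - x)
  set q := ((S * Lam (y - x) * S) * (S * Lam (y - x) * S)).trace with hqdef
  have hq0 : 0 ≤ q := trace_sq_nonneg _ hDT
  have hloc : locNorm Lam x (x - y) = Real.sqrt q := by
    unfold locNorm
    congr 1
    rw [quad (x - y) (x - y)]
    have hneg : S * Lam (x - y) * S = -(S * Lam (y - x) * S) := by
      have e : Lam (x - y) = -Lam (y - x) := by
        rw [← map_neg]; congr 1; abel
      rw [e, Matrix.mul_neg, Matrix.neg_mul]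
    rw [hqdef, hneg, Matrix.neg_mul, Matrix.mul_neg, neg_neg]
  set r := Real.sqrt q with hrdef
  have hr0 : 0 ≤ r := Real.sqrt_nonneg q
  have hr : r < 1 / 2 := by rw [hloc] at h; exact h
  have hqr2 : q ≤ r ^ 2 := le_of_eq (Real.sq_sqrt hq0).symm
  obtain ⟨N, hEN, hNE, hNT, hNbd⟩ :=
    inverse_perturb (S * Lam (y - x) * S) hDT hr0 (by linarith) hqr2
  -- 1 + D = S Λy S and Λy⁻¹ = S N S
  have hE : (1 : Matrix (Fin L) (Fin L) ℝ) + S * Lam (y - x) * S = S * Lam y * S := by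
    have h2 : Lam y = Lam x + Lam (y - x) := by
      rw [← map_add]; congr 1; abel
    rw [h2, Matrix.mul_add, Matrix.add_mul, hMx]
  have hLamy : Lam y = R * (1 + S * Lam (y - x) * S) * R := by
    rw [hE, hRMR y]
  have hyinv : (Lam y)⁻¹ = S * N * S := by
    apply Matrix.inv_eq_right_inv
    rw [hLamy]
    have e : R * (1 + S * Lam (y - x) * S) * R * (S * N * S)
        = R * ((1 + S * Lam (y - x) * S) * ((R * S) * N)) * S := by noncomm_ring
    rw [e, hRS, one_mul, hEN, mul_one, hRS]
  -- orthogonality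
  have horth : ∀ w, ((S * Lam v * S) * (S * Lam w * S)).trace
      = (N * (S * Lam w * S)).trace := by
    intro w
    have h1 : w ⬝ᵥ (hess Lam x) *ᵥ v = w ⬝ᵥ t := by rw [hHv]
    rw [quad w v, hdual w, hyinv] at h1
    have h2 : (S * N * S * Lam w).trace = (N * (S * Lam w * S)).trace := by
      have e : S * N * S * Lam w = S * (N * (S * Lam w)) := by noncomm_ring
      rw [e, Matrix.trace_mul_comm]
      have e2 : N * (S * Lam w) * S = N * (S * Lam w * S) := by noncomm_ring
      rw [e2]
    rw [h2] at h1
    rw [Matrix.trace_mul_comm]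
    exact h1
  have hKT := hMT v
  have hMvx : S * Lam (v - x) * S = S * Lam v * S - 1 := by
    have e : Lam (v - x) = Lam v - Lam x := map_sub Lam v x
    rw [e, Matrix.mul_sub, Matrix.sub_mul, hMx]
  have horthvx : ((S * Lam v * S - N) * (S * Lam v * S - 1)).trace = 0 := by
    have h1 := horth (v - x)
    rw [hMvx] at h1
    rw [Matrix.sub_mul, Matrix.trace_sub, h1, sub_self]
  have hN1T : (N - 1)ᵀ = N - 1 := by
    rw [Matrix.transpose_sub, hNT, Matrix.transpose_one]
  have hK1T : (S * Lam v * S - 1)ᵀ = S * Lam v * S - 1 := by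
    rw [Matrix.transpose_sub, hKT, Matrix.transpose_one]
  set a := ((S * Lam v * S - 1) * (S * Lam v * S - 1)).trace with hadef
  have ha0 : 0 ≤ a := trace_sq_nonneg _ hK1T
  have key : a = ((N - 1) * (S * Lam v * S - 1)).trace := by
    have e : (S * Lam v * S - 1) * (S * Lam v * S - 1)
        = (S * Lam v * S - N) * (S * Lam v * S - 1)
          + (N - 1) * (S * Lam v * S - 1) := by noncomm_ring
    rw [hadef, e, Matrix.trace_add, horthvx, zero_add]
  have hcs := trace_cauchy_schwarz (N - 1) (S * Lam v * S - 1) hN1T hK1T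
  rw [← key] at hcs
  have hrr : (r / (1 - r)) ^ 2 < 1 := by
    have h1 : r / (1 - r) < 1 := (div_lt_one (by linarith)).mpr (by linarith)
    have h2 : 0 ≤ r / (1 - r) := div_nonneg hr0 (by linarith)
    nlinarith
  have hb : ((N - 1) * (N - 1)).trace ≤ (r / (1 - r)) ^ 2 := hNbd
  have hbn : 0 ≤ ((N - 1) * (N - 1)).trace := trace_sq_nonneg _ hN1T
  have hb1 : ((N - 1) * (N - 1)).trace < 1 := lt_of_le_of_lt hb hrr
  have ha1 : a < 1 := by
    rcases eq_or_lt_of_le ha0 with h0 | h0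
    · linarith
    · rw [← hadef, pow_two] at hcs
      have h3 : a ≤ ((N - 1) * (N - 1)).trace := le_of_mul_le_mul_right hcs h0
      linarith
  have hKpsd : (S * Lam v * S).PosSemidef := psd_of_near_one _ hKT ha1
  have hfin := hKpsd.mul_mul_conjTranspose_same R
  rw [hRherm] at hfin
  rw [show Lam ((hess Lam x)⁻¹.mulVec t) = R * (S * Lam v * S) * R from (hRMR v).symm]
  exact hfin
end
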